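/- Let ξ > 0, set x₀ = √(1 + ξ²) − ξ, and let A be the 2×2 matrix with rows (−ξ, −1) and (1, −ξ), so that A_1 has rows (−2ξ, −1), (−1, 0) and A_2 has rows (0, 1), (1, −2ξ). Let p₁ ≥ 0. Then for every 2×2 positive semidefinite matrix M with ⟨A_1, M⟩ = −p₁ one has ⟨A_2, M⟩ ≤ x₀² p₁, and this bound is attained: there exists a positive semidefinite matrix M of rank at most 1 with ⟨A_1, M⟩ = −p₁ and ⟨A_2, M⟩ = x₀² p₁ (namely M = λ mmᵀ with m = (1, x₀)/√(1 + x₀²) and suitable λ ≥ 0). Hence the value of the associated semidefinite program equals x₀² p₁. -/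

import Mathlib

open Matrix

/-- Trace inner product on square matrices: ⟨X, Y⟩ = tr(XY). -/
noncomputable def ip {m : ℕ} (X Y : Matrix (Fin m) (Fin m) ℝ) : ℝ := (X * Y).trace

/-- For `A = !![-ξ, -1; 1, -ξ]`, so that `A₁ = !![-2ξ, -1; -1, 0]` and
`A₂ = !![0, 1; 1, -2ξ]`, and `p₁ ≥ 0`: every `M ⪰ 0` with `⟨A₁, M⟩ = -p₁` satisfies
`⟨A₂, M⟩ ≤ x₀² p₁` where `x₀ = √(1 + ξ²) − ξ`, the bound is attained by a positive
semidefinite matrix of rank at most 1, and hence the value of the associated semidefinite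
program equals `x₀² p₁`. -/
theorem sdp_two_spin_value (ξ : ℝ) (hξ : 0 < ξ)
    (x₀ : ℝ) (hx₀ : x₀ = Real.sqrt (1 + ξ ^ 2) - ξ)
    (p₁ : ℝ) (hp₁ : 0 ≤ p₁) :
    (∀ M : Matrix (Fin 2) (Fin 2) ℝ, M.PosSemidef →
      ip !![-2 * ξ, -1; -1, 0] M = -p₁ →
      ip !![0, 1; 1, -2 * ξ] M ≤ x₀ ^ 2 * p₁) ∧
    (∃ M : Matrix (Fin 2) (Fin 2) ℝ, M.PosSemidef ∧ M.rank ≤ 1 ∧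
      (∃ lam : ℝ, 0 ≤ lam ∧
        M = lam • Matrix.of (fun i j : Fin 2 =>
          (![1, x₀] i / Real.sqrt (1 + x₀ ^ 2)) *
          (![1, x₀] j / Real.sqrt (1 + x₀ ^ 2)))) ∧
      ip !![-2 * ξ, -1; -1, 0] M = -p₁ ∧
      ip !![0, 1; 1, -2 * ξ] M = x₀ ^ 2 * p₁) ∧
    IsGreatest {E : ℝ | ∃ M : Matrix (Fin 2) (Fin 2) ℝ, M.PosSemidef ∧
      ip !![-2 * ξ, -1; -1, 0] M = -p₁ ∧ ip !![0, 1; 1, -2 * ξ] M = E}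
      (x₀ ^ 2 * p₁) := by
  have hsq : Real.sqrt (1 + ξ ^ 2) ^ 2 = 1 + ξ ^ 2 := Real.sq_sqrt (by positivity)
  have hx : x₀ ^ 2 + 2 * ξ * x₀ = 1 := by rw [hx₀]; nlinarith [hsq]
  have hx₀pos : 0 < x₀ := by
    rw [hx₀, sub_pos, Real.lt_sqrt hξ.le]
    linarith
  set s := Real.sqrt (1 + x₀ ^ 2) with hs
  have hs2 : s ^ 2 = 1 + x₀ ^ 2 := Real.sq_sqrt (by positivity)
  have hspos : 0 < s := Real.sqrt_pos.mpr (by positivity)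
  have hξx : 0 < ξ + x₀ := by linarith
  -- upper bound
  have key : ∀ M : Matrix (Fin 2) (Fin 2) ℝ, M.PosSemidef →
      ip !![-2 * ξ, -1; -1, 0] M = -p₁ →
      ip !![0, 1; 1, -2 * ξ] M ≤ x₀ ^ 2 * p₁ := by
    intro M hM hc
    have quad := hM.dotProduct_mulVec_nonneg ![x₀, -1]
    simp [dotProduct, mulVec, Fin.sum_univ_two] at quad
    simp [ip, Matrix.trace_fin_two, Matrix.mul_apply, Matrix.vecMul, dotProduct,
      Fin.sum_univ_two] at hc ⊢
    have hxb : (M 0 1 + M 1 0) * (x₀ ^ 2 + 2 * ξ * x₀) = (M 0 1 + M 1 0) * 1 := by rw [hx]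
    nlinarith [mul_nonneg hξ.le quad, hxb, hc]
  -- the optimal matrix
  set lam : ℝ := p₁ * (1 + x₀ ^ 2) / (2 * (ξ + x₀)) with hlamdef
  have hlam : 0 ≤ lam := by positivity
  set M : Matrix (Fin 2) (Fin 2) ℝ := lam • Matrix.of (fun i j : Fin 2 =>
      (![1, x₀] i / s) * (![1, x₀] j / s)) with hM
  have hpsd : M.PosSemidef := by
    have h := posSemidef_conjTranspose_mul_self
      (Matrix.of (fun (_ : Fin 1) (j : Fin 2) => Real.sqrt lam * (![1, x₀] j / s)))
    have he : (Matrix.of (fun (_ : Fin 1) (j : Fin 2) => Real.sqrt lam * (![1, x₀] j / s)))ᴴ *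
        (Matrix.of (fun (_ : Fin 1) (j : Fin 2) => Real.sqrt lam * (![1, x₀] j / s))) = M := by
      ext i j
      simp [hM, Matrix.mul_apply, Matrix.conjTranspose_apply, Fin.sum_univ_one]
      have hl : Real.sqrt lam * Real.sqrt lam = lam := Real.mul_self_sqrt hlam
      linear_combination (![1, x₀] i / s) * (![1, x₀] j / s) * hl
    rwa [he] at h
  have hrank : M.rank ≤ 1 := by
    have hMv : M =
        replicateCol (Fin 1) (fun i => lam * (![1, x₀] i / s)) * replicateRow (Fin 1) (fun j => ![1, x₀] j / s) := by
      refine Eq.trans ?_ (vecMulVec_eq (Fin 1) _ _)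
      ext i j
      simp [hM, vecMulVec_apply]
      ring
    rw [hMv]
    exact (rank_mul_le_right _ _).trans
      (by simpa using rank_le_card_height (replicateRow (Fin 1) (fun j => ![1, x₀] j / s)))
  have hc1 : ip !![-2 * ξ, -1; -1, 0] M = -p₁ := by
    simp [hM, ip, Matrix.trace_fin_two, Matrix.mul_apply, Matrix.vecMul, dotProduct,
      Fin.sum_univ_two, Matrix.smul_apply, Matrix.of_apply, smul_eq_mul,
      Matrix.vecHead, Matrix.vecTail, Pi.smul_apply, hlamdef]
    field_simp
    linear_combination (2*p₁*(ξ+x₀)) * hs2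
  have hc2 : ip !![0, 1; 1, -2 * ξ] M = x₀ ^ 2 * p₁ := by
    simp [hM, ip, Matrix.trace_fin_two, Matrix.mul_apply, Matrix.vecMul, dotProduct,
      Fin.sum_univ_two, Matrix.smul_apply, Matrix.of_apply, smul_eq_mul,
      Matrix.vecHead, Matrix.vecTail, Pi.smul_apply, hlamdef]
    field_simp
    linear_combination (-(2*p₁*x₀*(ξ+x₀))) * hs2 + (-(2*p₁*(1+x₀^2))) * hx
  refine ⟨key, ⟨M, hpsd, hrank, ⟨lam, hlam, hM⟩, hc1, hc2⟩, ⟨M, hpsd, hc1, hc2⟩, ?_⟩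
  rintro E ⟨N, hN, h1, h2⟩
  rw [← h2]
  exact key N hN h1
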